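/- arXiv:1009.2948 — 2 statements merged into one kernel-verified Lean document; each statement's English description precedes it below -/
import Mathlib

section
/- Let D ⊂ ℝⁿ be a bounded domain which is moreover convex. Then the inaccessibility function r : D → ℝ₊, r(p) = min_{v ∈ S^{n-1}} f_p(v), is continuous on D. -/
open scoped RealInnerProductSpace
open Metric MeasureTheory

/-- For a point `p` and a unit vector `v`, the length of the connected component of
`(p + ℝ v) ∩ D` containing `p`, computed as the Lebesgue measure of the corresponding
set of parameters `t` (its connected component containing `0`). -/
noncomputable def segLen {n : ℕ} (D : Set (EuclideanSpace ℝ (Fin n)))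
    (p v : EuclideanSpace ℝ (Fin n)) : ℝ :=
  (volume (connectedComponentIn {t : ℝ | p + t • v ∈ D} 0)).toReal

/-- Inaccessibility of `p` in `D`: the infimum (a minimum, by lower semicontinuity)
of `f_p` over the unit sphere. -/
noncomputable def inacc {n : ℕ} (D : Set (EuclideanSpace ℝ (Fin n)))
    (p : EuclideanSpace ℝ (Fin n)) : ℝ :=
  sInf (segLen D p '' sphere (0 : EuclideanSpace ℝ (Fin n)) 1)

section Aux

variable {n : ℕ} {D : Set (EuclideanSpace ℝ (Fin n))}

/-- The parameter set of the chord through `p` in direction `v`. -/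
private def Sset (D : Set (EuclideanSpace ℝ (Fin n)))
    (p v : EuclideanSpace ℝ (Fin n)) : Set ℝ :=
  {t : ℝ | p + t • v ∈ D}

private lemma Sset_convex (hConv : Convex ℝ D) (p v : EuclideanSpace ℝ (Fin n)) :
    Convex ℝ (Sset D p v) := by
  have h := hConv.affine_preimage (AffineMap.lineMap p (p + v) : ℝ →ᵃ[ℝ] _)
  have : Sset D p v = (AffineMap.lineMap p (p + v) : ℝ →ᵃ[ℝ] _) ⁻¹' D := by
    ext t
    simp [Sset, AffineMap.lineMap_apply, add_comm]
  rw [this]; exact h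

private lemma Sset_subset_Icc (hBdd : Bornology.IsBounded D) {p v : EuclideanSpace ℝ (Fin n)}
    (hp : p ∈ D) (hv : ‖v‖ = 1) :
    ∃ R : ℝ, Sset D p v ⊆ Set.Icc (-R) R := by
  obtain ⟨R, hR⟩ := hBdd.subset_closedBall 0
  refine ⟨2 * R, fun t ht => ?_⟩
  have h1 : ‖p + t • v‖ ≤ R := by simpa [mem_closedBall, dist_eq_norm] using hR ht
  have h2 : ‖p‖ ≤ R := by simpa [mem_closedBall, dist_eq_norm] using hR hp
  have h3 : ‖t • v‖ ≤ 2 * R := by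
    have : t • v = (p + t • v) - p := by abel
    rw [this]
    calc ‖(p + t • v) - p‖ ≤ ‖p + t • v‖ + ‖p‖ := norm_sub_le _ _
      _ ≤ 2 * R := by linarith
  have h4 : |t| ≤ 2 * R := by
    rwa [norm_smul, hv, mul_one, Real.norm_eq_abs] at h3
  exact abs_le.mp h4

private lemma segLen_eq_sub (hBdd : Bornology.IsBounded D) (hConv : Convex ℝ D)
    {p v : EuclideanSpace ℝ (Fin n)} (hp : p ∈ D) (hv : ‖v‖ = 1) :
    segLen D p v = sSup (Sset D p v) - sInf (Sset D p v) := by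
  set S := Sset D p v with hS
  have h0 : (0 : ℝ) ∈ S := by rw [hS]; simpa [Sset] using hp
  have hne : S.Nonempty := ⟨0, h0⟩
  obtain ⟨R, hRS⟩ := Sset_subset_Icc hBdd hp hv
  have hba : BddAbove S := ⟨R, fun t ht => (hRS ht).2⟩
  have hbb : BddBelow S := ⟨-R, fun t ht => (hRS ht).1⟩
  have hconvS : Convex ℝ S := Sset_convex hConv p v
  have hA0 : sInf S ≤ 0 := csInf_le hbb h0
  have h0B : 0 ≤ sSup S := le_csSup hba h0
  have hcc : connectedComponentIn {t : ℝ | p + t • v ∈ D} 0 = S :=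
    hconvS.isPreconnected.connectedComponentIn h0
  have hsub1 : Set.Ioo (sInf S) (sSup S) ⊆ S := by
    intro t ht
    obtain ⟨s, hs, hst⟩ := exists_lt_of_csInf_lt hne ht.1
    obtain ⟨u, hu, htu⟩ := exists_lt_of_lt_csSup hne ht.2
    exact hconvS.ordConnected.out hs hu ⟨hst.le, htu.le⟩
  have hsub2 : S ⊆ Set.Icc (sInf S) (sSup S) := fun t ht =>
    ⟨csInf_le hbb ht, le_csSup hba ht⟩
  have hvol : volume S = ENNReal.ofReal (sSup S - sInf S) := by
    refine le_antisymm ?_ ?_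
    · calc volume S ≤ volume (Set.Icc (sInf S) (sSup S)) := measure_mono hsub2
        _ = ENNReal.ofReal (sSup S - sInf S) := Real.volume_Icc
    · calc ENNReal.ofReal (sSup S - sInf S) = volume (Set.Ioo (sInf S) (sSup S)) :=
          Real.volume_Ioo.symm
        _ ≤ volume S := measure_mono hsub1
  rw [segLen, hcc, hvol, ENNReal.toReal_ofReal (by linarith)]

private lemma segLen_concave (hBdd : Bornology.IsBounded D) (hConv : Convex ℝ D)
    {v : EuclideanSpace ℝ (Fin n)} (hv : ‖v‖ = 1)
    {p q : EuclideanSpace ℝ (Fin n)} (hp : p ∈ D) (hq : q ∈ D)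
    {a b : ℝ} (ha : 0 ≤ a) (hb : 0 ≤ b) (hab : a + b = 1) :
    a * segLen D p v + b * segLen D q v ≤ segLen D (a • p + b • q) v := by
  have hc : a • p + b • q ∈ D := hConv hp hq ha hb hab
  have hmem : ∀ {s t : ℝ}, s ∈ Sset D p v → t ∈ Sset D q v →
      a * s + b * t ∈ Sset D (a • p + b • q) v := by
    intro s t hs ht
    have : (a • p + b • q) + (a * s + b * t) • v = a • (p + s • v) + b • (q + t • v) := by
      simp only [smul_add, smul_smul, add_smul]
      abel
    simpa [Sset, this] using hConv hs ht ha hb hab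
  -- nonemptiness and bounds
  have h0p : (0 : ℝ) ∈ Sset D p v := by simpa [Sset] using hp
  have h0q : (0 : ℝ) ∈ Sset D q v := by simpa [Sset] using hq
  have h0c : (0 : ℝ) ∈ Sset D (a • p + b • q) v := by simpa [Sset] using hc
  obtain ⟨Rp, hRp⟩ := Sset_subset_Icc hBdd hp hv
  obtain ⟨Rq, hRq⟩ := Sset_subset_Icc hBdd hq hv
  obtain ⟨Rc, hRc⟩ := Sset_subset_Icc hBdd hc hv
  have hbap : BddAbove (Sset D p v) := ⟨Rp, fun t ht => (hRp ht).2⟩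
  have hbbp : BddBelow (Sset D p v) := ⟨-Rp, fun t ht => (hRp ht).1⟩
  have hbaq : BddAbove (Sset D q v) := ⟨Rq, fun t ht => (hRq ht).2⟩
  have hbbq : BddBelow (Sset D q v) := ⟨-Rq, fun t ht => (hRq ht).1⟩
  have hbac : BddAbove (Sset D (a • p + b • q) v) := ⟨Rc, fun t ht => (hRc ht).2⟩
  have hbbc : BddBelow (Sset D (a • p + b • q) v) := ⟨-Rc, fun t ht => (hRc ht).1⟩
  have hnep : (Sset D p v).Nonempty := ⟨0, h0p⟩
  have hneq : (Sset D q v).Nonempty := ⟨0, h0q⟩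
  -- sSup superadditivity
  have hsup : a * sSup (Sset D p v) + b * sSup (Sset D q v) ≤
      sSup (Sset D (a • p + b • q) v) := by
    refine le_of_forall_sub_le fun ε hε => ?_
    obtain ⟨s, hs, hs'⟩ := exists_lt_of_lt_csSup hnep
      (show sSup (Sset D p v) - ε < sSup (Sset D p v) by linarith)
    obtain ⟨t, ht, ht'⟩ := exists_lt_of_lt_csSup hneq
      (show sSup (Sset D q v) - ε < sSup (Sset D q v) by linarith)
    have h1 : a * s + b * t ≤ sSup (Sset D (a • p + b • q) v) :=
      le_csSup hbac (hmem hs ht)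
    nlinarith [mul_le_mul_of_nonneg_left hs'.le ha, mul_le_mul_of_nonneg_left ht'.le hb]
  -- sInf subadditivity
  have hinf : sInf (Sset D (a • p + b • q) v) ≤
      a * sInf (Sset D p v) + b * sInf (Sset D q v) := by
    refine le_of_forall_sub_le fun ε hε => ?_
    obtain ⟨s, hs, hs'⟩ := exists_lt_of_csInf_lt hnep
      (show sInf (Sset D p v) < sInf (Sset D p v) + ε by linarith)
    obtain ⟨t, ht, ht'⟩ := exists_lt_of_csInf_lt hneq
      (show sInf (Sset D q v) < sInf (Sset D q v) + ε by linarith)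
    have h1 : sInf (Sset D (a • p + b • q) v) ≤ a * s + b * t :=
      csInf_le hbbc (hmem hs ht)
    nlinarith [mul_le_mul_of_nonneg_left hs'.le ha, mul_le_mul_of_nonneg_left ht'.le hb]
  rw [segLen_eq_sub hBdd hConv hp hv, segLen_eq_sub hBdd hConv hq hv,
    segLen_eq_sub hBdd hConv hc hv]
  linarith

private lemma segLen_nonneg (D : Set (EuclideanSpace ℝ (Fin n)))
    (p v : EuclideanSpace ℝ (Fin n)) : 0 ≤ segLen D p v :=
  ENNReal.toReal_nonneg

end Aux

/-- for a bounded *convex* domain `D ⊂ ℝⁿ`, the inaccessibility function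
`r(p) = min_v f_p(v)` is continuous on `D`. -/
theorem continuousOn_inacc_of_convex {n : ℕ} (D : Set (EuclideanSpace ℝ (Fin n)))
    (hOpen : IsOpen D) (hNe : D.Nonempty) (hBdd : Bornology.IsBounded D)
    (hConv : Convex ℝ D) :
    ContinuousOn (inacc D) D := by
  by_cases hs : (sphere (0 : EuclideanSpace ℝ (Fin n)) 1).Nonempty
  · -- inacc is concave on D, hence continuous
    have hconc : ConcaveOn ℝ D (inacc D) := by
      refine ⟨hConv, fun p hp q hq a b ha hb hab => ?_⟩
      simp only [smul_eq_mul]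
      refine le_csInf (hs.image _) ?_
      rintro y ⟨v, hv, rfl⟩
      have hv1 : ‖v‖ = 1 := by simpa using hv
      have hbddp : BddBelow (segLen D p '' sphere (0 : EuclideanSpace ℝ (Fin n)) 1) :=
        ⟨0, by rintro y ⟨w, _, rfl⟩; exact segLen_nonneg D p w⟩
      have hbddq : BddBelow (segLen D q '' sphere (0 : EuclideanSpace ℝ (Fin n)) 1) :=
        ⟨0, by rintro y ⟨w, _, rfl⟩; exact segLen_nonneg D q w⟩
      have h1 : inacc D p ≤ segLen D p v := csInf_le hbddp ⟨v, hv, rfl⟩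
      have h2 : inacc D q ≤ segLen D q v := csInf_le hbddq ⟨v, hv, rfl⟩
      have h3 := segLen_concave hBdd hConv hv1 hp hq ha hb hab
      nlinarith [mul_le_mul_of_nonneg_left h1 ha, mul_le_mul_of_nonneg_left h2 hb]
    exact hconc.continuousOn hOpen
  · -- the sphere is empty, so `inacc D` is constantly `sInf ∅ = 0`
    have : inacc D = fun _ => 0 := by
      funext p
      rw [inacc, Set.not_nonempty_iff_eq_empty.mp hs, Set.image_empty, Real.sInf_empty]
    rw [this]
    exact continuousOn_const
end

section
/- Let D ⊂ ℝⁿ be a bounded convex domain, p ∈ D, r = r(p), and let [P,Q] be a segment of length r with P, Q ∈ ∂D and p ∈ [P,Q]. Let v_P and v_Q be supporting unit vectors at P and Q respectively, and suppose v_P and v_Q are not parallel. Then Q − P lies in the plane π spanned by v_P and v_Q; there exists a unit vector v ∈ π orthogonal to Q − P such that E_r ⊆ {x ∈ ℝⁿ : ⟨x − p, v⟩ ≤ 0}; and every point x ∈ [P,Q] \ {p} sufficiently close to p satisfies r(x) < r. -/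
open scoped RealInnerProductSpace
open Metric MeasureTheory

/-- `E_r`: the closure of the set of points of `D` with inaccessibility at least `r`. -/
noncomputable def Eset {n : ℕ} (D : Set (EuclideanSpace ℝ (Fin n))) (r : ℝ) :
    Set (EuclideanSpace ℝ (Fin n)) :=
  closure {p | p ∈ D ∧ r ≤ inacc D p}

/-- `v` is a supporting (unit) vector of `D` at the boundary point `p`: `v` is a unit
vector and `p` lies on the supporting hyperplane `H_v = {x | ⟪x,v⟫ = sup_{y ∈ D} ⟪y,v⟫}`. -/
def IsSupportVec {n : ℕ} (D : Set (EuclideanSpace ℝ (Fin n)))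
    (v p : EuclideanSpace ℝ (Fin n)) : Prop :=
  ‖v‖ = 1 ∧ ⟪p, v⟫ = sSup ((fun y : EuclideanSpace ℝ (Fin n) => ⟪y, v⟫) '' D)

lemma chord_len_le {n : ℕ} (D : Set (EuclideanSpace ℝ (Fin n)))
    (x w v₁ v₂ : EuclideanSpace ℝ (Fin n)) (c₁ c₂ q s : ℝ)
    (hx : x ∈ D) (hq : 0 < q) (hs : 0 < s)
    (h1 : ⟪w, v₁⟫ = q) (h2 : ⟪w, v₂⟫ = -s)
    (hD1 : ∀ y ∈ D, ⟪y, v₁⟫ ≤ c₁) (hD2 : ∀ y ∈ D, ⟪y, v₂⟫ ≤ c₂) :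
    segLen D x w ≤ (c₁ - ⟪x, v₁⟫) / q + (c₂ - ⟪x, v₂⟫) / s := by
  set a := c₁ - ⟪x, v₁⟫ with ha_def
  set b := c₂ - ⟪x, v₂⟫ with hb_def
  have ha : 0 ≤ a := by have := hD1 x hx; linarith
  have hb : 0 ≤ b := by have := hD2 x hx; linarith
  have hsub : connectedComponentIn {t : ℝ | x + t • w ∈ D} 0 ⊆ Set.Icc (-(b/s)) (a/q) := by
    refine (connectedComponentIn_subset _ _).trans ?_
    intro t ht
    have hmem : x + t • w ∈ D := ht
    have e1 : ⟪x + t • w, v₁⟫ = ⟪x, v₁⟫ + t * q := by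
      rw [inner_add_left, real_inner_smul_left, h1]
    have e2 : ⟪x + t • w, v₂⟫ = ⟪x, v₂⟫ + t * (-s) := by
      rw [inner_add_left, real_inner_smul_left, h2]
    have b1 := hD1 _ hmem
    have b2 := hD2 _ hmem
    rw [e1] at b1; rw [e2] at b2
    constructor
    · rw [neg_le, le_div_iff₀ hs]; nlinarith
    · rw [le_div_iff₀ hq]; nlinarith
  have hvol : volume (connectedComponentIn {t : ℝ | x + t • w ∈ D} 0)
      ≤ ENNReal.ofReal (a/q + b/s) := by
    calc volume (connectedComponentIn {t : ℝ | x + t • w ∈ D} 0)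
        ≤ volume (Set.Icc (-(b/s)) (a/q)) := measure_mono hsub
      _ = ENNReal.ofReal (a/q - -(b/s)) := Real.volume_Icc
      _ = ENNReal.ofReal (a/q + b/s) := by ring_nf
  have := ENNReal.toReal_mono (by simp) hvol
  refine this.trans ?_
  rw [ENNReal.toReal_ofReal (by positivity)]

lemma inacc_le_segLen {n : ℕ} (D : Set (EuclideanSpace ℝ (Fin n)))
    (x w : EuclideanSpace ℝ (Fin n)) (hw : ‖w‖ = 1) :
    inacc D x ≤ segLen D x w := by
  refine csInf_le ⟨0, ?_⟩ ⟨w, by simpa using hw, rfl⟩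
  rintro z ⟨v, -, rfl⟩
  exact ENNReal.toReal_nonneg

open Filter in
lemma exists_lt_of_hasDerivAt_ne {f : ℝ → ℝ} {c : ℝ} (hf : HasDerivAt f c 0) (hc : c ≠ 0)
    {U : Set ℝ} (hU : U ∈ nhds (0:ℝ)) : ∃ θ ∈ U, f θ < f 0 := by
  have hslope := hasDerivAt_iff_tendsto_slope.mp hf
  rcases lt_or_gt_of_ne hc with hneg | hpos
  · have h1 : ∀ᶠ θ in nhdsWithin (0:ℝ) {0}ᶜ, slope f 0 θ < 0 :=
      hslope.eventually_lt_const hneg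
    have h2 : ∀ᶠ θ in nhdsWithin (0:ℝ) (Set.Ioi 0), slope f 0 θ < 0 :=
      h1.filter_mono (nhdsWithin_mono _ (by intro z hz; simpa using ne_of_gt hz))
    have h3 : ∀ᶠ θ in nhdsWithin (0:ℝ) (Set.Ioi 0), θ ∈ U :=
      eventually_nhdsWithin_of_eventually_nhds hU
    have h4 : ∀ᶠ θ in nhdsWithin (0:ℝ) (Set.Ioi 0), (0:ℝ) < θ := self_mem_nhdsWithin
    obtain ⟨θ, hθs, hθU, hθpos⟩ := (h2.and (h3.and h4)).exists
    refine ⟨θ, hθU, ?_⟩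
    rw [slope_def_field] at hθs
    have h5 : (0:ℝ) < θ - 0 := by linarith
    nlinarith [(div_lt_iff₀ h5).mp hθs]
  · have h1 : ∀ᶠ θ in nhdsWithin (0:ℝ) {0}ᶜ, 0 < slope f 0 θ :=
      hslope.eventually_const_lt hpos
    have h2 : ∀ᶠ θ in nhdsWithin (0:ℝ) (Set.Iio 0), 0 < slope f 0 θ :=
      h1.filter_mono (nhdsWithin_mono _ (by intro z hz; simpa using ne_of_lt hz))
    have h3 : ∀ᶠ θ in nhdsWithin (0:ℝ) (Set.Iio 0), θ ∈ U :=
      eventually_nhdsWithin_of_eventually_nhds hU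
    have h4 : ∀ᶠ θ in nhdsWithin (0:ℝ) (Set.Iio 0), θ < (0:ℝ) := self_mem_nhdsWithin
    obtain ⟨θ, hθs, hθU, hθneg⟩ := (h2.and (h3.and h4)).exists
    refine ⟨θ, hθU, ?_⟩
    rw [slope_def_field] at hθs
    have h5 : θ - 0 < 0 := by linarith
    nlinarith [(lt_div_iff_of_neg h5).mp hθs]


set_option maxHeartbeats 2000000 in
/-- Let `D ⊂ ℝⁿ` be a bounded convex domain, `p ∈ D`, `r = r(p)`, and
`[P,Q]` a segment of length `r` with `P, Q ∈ ∂D` and `p ∈ [P,Q]`; let `v_P, v_Q` be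
supporting unit vectors at `P, Q`, and suppose they are not parallel. Then `Q - P`
lies in the plane `π` spanned by `v_P, v_Q`; there is a unit vector `v ∈ π` orthogonal
to `Q - P` with `E_r ⊆ {x | ⟪x - p, v⟫ ≤ 0}`; and all points of `[P,Q] \ {p}`
sufficiently close to `p` have inaccessibility `< r`. -/
theorem nonparallel_support_case {n : ℕ} (D : Set (EuclideanSpace ℝ (Fin n)))
    (hOpen : IsOpen D) (hNe : D.Nonempty) (hBdd : Bornology.IsBounded D)
    (hConv : Convex ℝ D)
    (p : EuclideanSpace ℝ (Fin n)) (hp : p ∈ D)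
    (P Q : EuclideanSpace ℝ (Fin n)) (hP : P ∈ frontier D) (hQ : Q ∈ frontier D)
    (hlen : dist P Q = inacc D p) (hseg : p ∈ segment ℝ P Q)
    (vP vQ : EuclideanSpace ℝ (Fin n))
    (hvP : IsSupportVec D vP P) (hvQ : IsSupportVec D vQ Q)
    (hpar : ¬ (vP = vQ ∨ vP = -vQ)) :
    Q - P ∈ Submodule.span ℝ ({vP, vQ} : Set (EuclideanSpace ℝ (Fin n))) ∧
    (∃ v : EuclideanSpace ℝ (Fin n), ‖v‖ = 1 ∧
      v ∈ Submodule.span ℝ ({vP, vQ} : Set (EuclideanSpace ℝ (Fin n))) ∧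
      ⟪v, Q - P⟫ = 0 ∧
      Eset D (inacc D p) ⊆ {x | ⟪x - p, v⟫ ≤ 0}) ∧
    (∃ ε > 0, ∀ x ∈ segment ℝ P Q, x ≠ p → dist x p < ε → inacc D x < inacc D p) := by
  set r := inacc D p with hr_def
  -- P, Q are not in D
  have hfr : frontier D = closure D \ D := by
    rw [hOpen.frontier_eq]
  have hPD : P ∉ D := by rw [hfr] at hP; exact hP.2
  have hQD : Q ∉ D := by rw [hfr] at hQ; exact hQ.2
  have hPcl : P ∈ closure D := by rw [hfr] at hP; exact hP.1
  have hQcl : Q ∈ closure D := by rw [hfr] at hQ; exact hQ.1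
  -- r > 0
  have hrpos : 0 < r := by
    rcases lt_or_eq_of_le (hlen ▸ dist_nonneg : (0:ℝ) ≤ r) with h | h
    · exact h
    · exfalso
      have hPQ : P = Q := dist_eq_zero.mp (hlen.trans h.symm)
      have : segment ℝ P Q = {P} := by rw [hPQ, segment_same]
      rw [this] at hseg
      exact hPD (Set.mem_singleton_iff.mp hseg ▸ hp)
  -- segment coordinates
  obtain ⟨a', μ, ha', hμ', hab, hpt⟩ := hseg
  have hpPne : p ≠ P := fun h => hPD (h ▸ hp)
  have hpQne : p ≠ Q := fun h => hQD (h ▸ hp)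
  have hμ0 : 0 < μ := by
    rcases lt_or_eq_of_le hμ' with h | h
    · exact h
    · exfalso; apply hpPne
      have ha1 : a' = 1 := by linarith
      rw [← hpt, ha1, ← h]; simp
  have hμ1 : μ < 1 := by
    rcases lt_or_eq_of_le ha' with h | h
    · linarith
    · exfalso; apply hpQne
      have hμeq : μ = 1 := by linarith
      rw [← hpt, hμeq, ← h]; simp
  -- direction w0
  have hdistPQ : ‖Q - P‖ = r := by rw [← hlen, dist_eq_norm, norm_sub_rev]
  set w0 : EuclideanSpace ℝ (Fin n) := r⁻¹ • (Q - P) with hw0_def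
  have hw0 : ‖w0‖ = 1 := by
    rw [hw0_def, norm_smul, hdistPQ, Real.norm_eq_abs, abs_inv,
      abs_of_pos hrpos, inv_mul_cancel₀ hrpos.ne']
  have hQP : Q - P = r • w0 := by
    rw [hw0_def, smul_smul, mul_inv_cancel₀ hrpos.ne', one_smul]
  have hp_eq : p = P + μ • (Q - P) := by
    rw [← hpt]
    have : a' = 1 - μ := by linarith
    rw [this]
    module
  have hsc1 : ((1 - μ) * r) • w0 = (1 - μ) • (Q - P) := by
    rw [hw0_def, smul_smul]
    congr 1
    field_simp
  have hsc2 : (-(μ * r)) • w0 = (-μ) • (Q - P) := by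
    rw [hw0_def, smul_smul]
    congr 1
    field_simp
  have hQ_eq : Q = p + ((1 - μ) * r) • w0 := by
    rw [hsc1, hp_eq]; module
  have hP_eq : P = p + (-(μ * r)) • w0 := by
    rw [hsc2, hp_eq]; module
  -- upper bounds from support vectors
  obtain ⟨hvPn, hvPs⟩ := hvP
  obtain ⟨hvQn, hvQs⟩ := hvQ
  have hbound : ∀ v : EuclideanSpace ℝ (Fin n), ‖v‖ = 1 →
      BddAbove ((fun y : EuclideanSpace ℝ (Fin n) => ⟪y, v⟫) '' D) := by
    intro v hv
    obtain ⟨R, hR⟩ := hBdd.exists_norm_le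
    refine ⟨R, ?_⟩
    rintro z ⟨y, hy, rfl⟩
    calc ⟪y, v⟫ ≤ ‖y‖ * ‖v‖ := real_inner_le_norm y v
      _ = ‖y‖ := by rw [hv, mul_one]
      _ ≤ R := hR y hy
  have hDQ : ∀ y ∈ D, ⟪y, vQ⟫ ≤ ⟪Q, vQ⟫ := by
    intro y hy; rw [hvQs]; exact le_csSup (hbound vQ hvQn) ⟨y, hy, rfl⟩
  have hDP : ∀ y ∈ D, ⟪y, vP⟫ ≤ ⟪P, vP⟫ := by
    intro y hy; rw [hvPs]; exact le_csSup (hbound vP hvPn) ⟨y, hy, rfl⟩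
  -- strict bounds at p
  have hstrict : ∀ v : EuclideanSpace ℝ (Fin n), ‖v‖ = 1 → (∀ y ∈ D, ⟪y, v⟫ ≤ ⟪Q, v⟫) →
      ⟪p, v⟫ < ⟪Q, v⟫ := by
    intro v hv hb
    obtain ⟨δ, hδ0, hδ⟩ := Metric.isOpen_iff.mp hOpen p hp
    have hmem : p + (δ/2) • v ∈ D := by
      apply hδ
      rw [mem_ball_iff_norm]
      simp only [add_sub_cancel_left]
      rw [norm_smul, hv, mul_one, Real.norm_eq_abs, abs_of_pos (by linarith)]
      linarith
    have := hb _ hmem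
    rw [inner_add_left, real_inner_smul_left, real_inner_self_eq_norm_sq, hv] at this
    nlinarith
  have hpQs : ⟪p, vQ⟫ < ⟪Q, vQ⟫ := hstrict vQ hvQn hDQ
  have hpPs : ⟪p, vP⟫ < ⟪P, vP⟫ := by
    obtain ⟨δ, hδ0, hδ⟩ := Metric.isOpen_iff.mp hOpen p hp
    have hmem : p + (δ/2) • vP ∈ D := by
      apply hδ
      rw [mem_ball_iff_norm]
      simp only [add_sub_cancel_left]
      rw [norm_smul, hvPn, mul_one, Real.norm_eq_abs, abs_of_pos (by linarith)]
      linarith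
    have := hDP _ hmem
    rw [inner_add_left, real_inner_smul_left, real_inner_self_eq_norm_sq, hvPn] at this
    nlinarith
  -- q0, s0
  set q0 : ℝ := ⟪w0, vQ⟫ with hq0_def
  set s0 : ℝ := -⟪w0, vP⟫ with hs0_def
  set α : ℝ := ⟪Q, vQ⟫ - ⟪p, vQ⟫ with hα_def
  set β : ℝ := ⟪P, vP⟫ - ⟪p, vP⟫ with hβ_def
  have hα0 : 0 < α := by rw [hα_def]; linarith
  have hβ0 : 0 < β := by rw [hβ_def]; linarith
  have hαq : α = ((1 - μ) * r) * q0 := by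
    rw [hα_def, hq0_def]
    nth_rewrite 1 [hQ_eq]
    rw [inner_add_left, real_inner_smul_left]
    ring
  have hβs : β = (μ * r) * s0 := by
    rw [hβ_def, hs0_def]
    nth_rewrite 1 [hP_eq]
    rw [inner_add_left, real_inner_smul_left]
    ring
  have hw0Q : ⟪w0, vQ⟫ = q0 := rfl
  have hw0P : ⟪w0, vP⟫ = -s0 := by rw [hs0_def]; ring
  clear_value q0 s0 α β w0 r
  have h1r : 0 < (1 - μ) * r := mul_pos (by linarith) hrpos
  have hμr : 0 < μ * r := mul_pos hμ0 hrpos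
  have hq0 : 0 < q0 := by
    rcases lt_trichotomy q0 0 with h | h | h
    · nlinarith [mul_pos h1r (neg_pos.mpr h)]
    · rw [h, mul_zero] at hαq; linarith
    · exact h
  have hs0 : 0 < s0 := by
    rcases lt_trichotomy s0 0 with h | h | h
    · nlinarith [mul_pos hμr (neg_pos.mpr h)]
    · rw [h, mul_zero] at hβs; linarith
    · exact h
  have hkey : α / q0 + β / s0 = r := by
    rw [hαq, hβs]
    field_simp
    ring
  -- the generic chord bound specialized
  have hcb : ∀ (x w : EuclideanSpace ℝ (Fin n)) (q s : ℝ), x ∈ D → 0 < q → 0 < s →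
      ⟪w, vQ⟫ = q → ⟪w, vP⟫ = -s →
      segLen D x w ≤ (⟪Q, vQ⟫ - ⟪x, vQ⟫) / q + (⟪P, vP⟫ - ⟪x, vP⟫) / s := by
    intro x w q s hx hq hs h1 h2
    exact chord_len_le D x w vQ vP _ _ q s hx hq hs h1 h2 hDQ hDP
  -- PART 1 : w0 ∈ span {vP, vQ}
  set K : Submodule ℝ (EuclideanSpace ℝ (Fin n)) :=
    Submodule.span ℝ ({vP, vQ} : Set (EuclideanSpace ℝ (Fin n))) with hK_def
  have hvPK : vP ∈ K := Submodule.subset_span (by simp)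
  have hvQK : vQ ∈ K := Submodule.subset_span (by simp)
  have hw0K : w0 ∈ K := by
    by_contra hns
    set π₀ : EuclideanSpace ℝ (Fin n) := (K.orthogonalProjection w0 : EuclideanSpace ℝ (Fin n))
      with hπ_def
    have hoX : w0 - π₀ ∈ Kᗮ := K.sub_starProjection_mem_orthogonal w0
    have hπK : π₀ ∈ K := SetLike.coe_mem _
    have hinQ : ⟪π₀, vQ⟫ = q0 := by
      have h0 : ⟪vQ, w0 - π₀⟫ = 0 := hoX vQ hvQK
      rw [inner_sub_right] at h0
      have h1 : ⟪vQ, π₀⟫ = ⟪vQ, w0⟫ := by linarith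
      rw [real_inner_comm, h1, real_inner_comm, hw0Q]
    have hinP : ⟪π₀, vP⟫ = -s0 := by
      have h0 : ⟪vP, w0 - π₀⟫ = 0 := hoX vP hvPK
      rw [inner_sub_right] at h0
      have h1 : ⟪vP, π₀⟫ = ⟪vP, w0⟫ := by linarith
      rw [real_inner_comm, h1, real_inner_comm, hw0P]
    have hdne : w0 - π₀ ≠ 0 := sub_ne_zero.mpr (fun h => hns (h ▸ hπK))
    have hiz : ⟪π₀, w0 - π₀⟫ = 0 := hoX π₀ hπK
    have hpyth : ‖π₀‖^2 + ‖w0 - π₀‖^2 = 1 := by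
      have h1 : ‖π₀ + (w0 - π₀)‖^2 = ‖π₀‖^2 + 2 * ⟪π₀, w0 - π₀⟫ + ‖w0 - π₀‖^2 :=
        norm_add_sq_real π₀ (w0 - π₀)
      rw [hiz] at h1
      have h2 : π₀ + (w0 - π₀) = w0 := by abel
      rw [h2, hw0] at h1
      linarith
    have hπpos : 0 < ‖π₀‖ := by
      rw [norm_pos_iff]
      intro h
      rw [h, inner_zero_left] at hinQ
      exact absurd hinQ.symm (ne_of_gt hq0)
    have hπlt : ‖π₀‖ < 1 := by
      have := norm_pos_iff.mpr hdne
      nlinarith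
    set X : ℝ := ‖π₀‖ with hX_def
    set w' : EuclideanSpace ℝ (Fin n) := X⁻¹ • π₀ with hw'_def
    have hw'n : ‖w'‖ = 1 := by
      rw [hw'_def, norm_smul, Real.norm_eq_abs, abs_inv, abs_of_pos hπpos, ← hX_def,
        inv_mul_cancel₀ (ne_of_gt hπpos)]
    have hw'Q : ⟪w', vQ⟫ = X⁻¹ * q0 := by
      rw [hw'_def, real_inner_smul_left, hinQ]
    have hw'P : ⟪w', vP⟫ = -(X⁻¹ * s0) := by
      rw [hw'_def, real_inner_smul_left, hinP]; ring
    have hXi : 0 < X⁻¹ := inv_pos.mpr hπpos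
    have hle := hcb p w' (X⁻¹ * q0) (X⁻¹ * s0) hp (mul_pos hXi hq0) (mul_pos hXi hs0) hw'Q hw'P
    have hrle : r ≤ segLen D p w' := by
      rw [hr_def]; exact inacc_le_segLen D p w' hw'n
    have hRHS : (⟪Q, vQ⟫ - ⟪p, vQ⟫) / (X⁻¹ * q0) + (⟪P, vP⟫ - ⟪p, vP⟫) / (X⁻¹ * s0)
        = X * r := by
      rw [← hα_def, ← hβ_def, ← hkey]
      field_simp
    rw [hRHS] at hle
    nlinarith
  have part1 : Q - P ∈ K := by rw [hQP]; exact K.smul_mem r hw0K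
  -- PART 2
  set u : EuclideanSpace ℝ (Fin n) := q0⁻¹ • vQ + s0⁻¹ • vP with hu_def
  have huw0 : ⟪w0, u⟫ = 0 := by
    rw [hu_def, inner_add_right, real_inner_smul_right, real_inner_smul_right, hw0Q, hw0P]
    field_simp
    ring
  have hune : u ≠ 0 := by
    intro h
    have h1 : s0⁻¹ • vP = -(q0⁻¹ • vQ) := by
      rw [hu_def] at h
      have := add_eq_zero_iff_eq_neg.mp h
      rw [this]; module
    have hvPe : vP = -((s0 * q0⁻¹) • vQ) := by
      have h2 : vP = s0 • (s0⁻¹ • vP) := by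
        rw [smul_smul, mul_inv_cancel₀ (ne_of_gt hs0), one_smul]
      rw [h2, h1, smul_neg, smul_smul]
    have hc1 : s0 * q0⁻¹ = 1 := by
      have h3 := congrArg norm hvPe
      rw [hvPn, norm_neg, norm_smul, hvQn, mul_one, Real.norm_eq_abs,
        abs_of_pos (mul_pos hs0 (inv_pos.mpr hq0))] at h3
      linarith
    apply hpar
    right
    rw [hvPe, hc1, one_smul]
  have hun : 0 < ‖u‖ := norm_pos_iff.mpr hune
  set v : EuclideanSpace ℝ (Fin n) := ‖u‖⁻¹ • u with hv_def
  have hvn : ‖v‖ = 1 := by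
    rw [hv_def, norm_smul, Real.norm_eq_abs, abs_inv, abs_of_pos hun,
      inv_mul_cancel₀ (ne_of_gt hun)]
  have hvK : v ∈ K := K.smul_mem _ (K.add_mem (K.smul_mem _ hvQK) (K.smul_mem _ hvPK))
  have hvw0 : ⟪w0, v⟫ = 0 := by
    rw [hv_def, real_inner_smul_right, huw0, mul_zero]
  have hvQP : ⟪v, Q - P⟫ = 0 := by
    rw [hQP, real_inner_smul_right, real_inner_comm, hvw0, mul_zero]
  -- the halfspace inclusion
  have hhs : Eset D r ⊆ {x | ⟪x - p, v⟫ ≤ 0} := by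
    have hcl : IsClosed {x : EuclideanSpace ℝ (Fin n) | ⟪x - p, v⟫ ≤ 0} := by
      have hcont : Continuous fun x : EuclideanSpace ℝ (Fin n) => ⟪x - p, v⟫ :=
        (continuous_id.sub continuous_const).inner continuous_const
      exact isClosed_le hcont continuous_const
    apply closure_minimal _ hcl
    rintro x ⟨hxD, hxr⟩
    have h1 : r ≤ segLen D x w0 := le_trans hxr (inacc_le_segLen D x w0 hw0)
    have h2 := hcb x w0 q0 s0 hxD hq0 hs0 hw0Q hw0P
    have hxu : ⟪x - p, u⟫ = (⟪x, vQ⟫ - ⟪p, vQ⟫) * q0⁻¹ + (⟪x, vP⟫ - ⟪p, vP⟫) * s0⁻¹ := by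
      rw [hu_def, inner_add_right, real_inner_smul_right, real_inner_smul_right,
        inner_sub_left, inner_sub_left]
      ring
    have h3 : (⟪Q, vQ⟫ - ⟪x, vQ⟫) / q0 + (⟪P, vP⟫ - ⟪x, vP⟫) / s0 = r - ⟪x - p, u⟫ := by
      rw [hxu, ← hkey, hα_def, hβ_def]
      field_simp
      ring
    rw [h3] at h2
    have h4 : ⟪x - p, u⟫ ≤ 0 := by linarith
    show ⟪x - p, v⟫ ≤ 0
    rw [hv_def, real_inner_smul_right]
    exact mul_nonpos_of_nonneg_of_nonpos (le_of_lt (inv_pos.mpr hun)) h4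
  -- PART 3
  refine ⟨part1, ⟨v, hvn, hvK, hvQP, hhs⟩, ?_⟩
  -- PART 3
  set q1 : ℝ := ⟪v, vQ⟫ with hq1_def
  set p1 : ℝ := ⟪v, vP⟫ with hp1_def
  have hvu2 : ⟪v, u⟫ = ‖u‖ := by
    rw [hv_def, real_inner_smul_left, real_inner_self_eq_norm_sq]
    field_simp
  have hvu : q1 * q0⁻¹ + p1 * s0⁻¹ = ‖u‖ := by
    rw [← hvu2, hu_def, inner_add_right, real_inner_smul_right, real_inner_smul_right,
      ← hq1_def, ← hp1_def]
    ring
  -- direction family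
  set W : ℝ → EuclideanSpace ℝ (Fin n) := fun θ => Real.cos θ • w0 + Real.sin θ • v
    with hW_def
  set qf : ℝ → ℝ := fun θ => Real.cos θ * q0 + Real.sin θ * q1 with hqf_def
  set sf : ℝ → ℝ := fun θ => Real.cos θ * s0 - Real.sin θ * p1 with hsf_def
  have hWn : ∀ θ, ‖W θ‖ = 1 := by
    intro θ
    have hsq : ‖W θ‖ ^ 2 = 1 := by
      have h1 : ‖Real.cos θ • w0 + Real.sin θ • v‖ ^ 2
          = ‖Real.cos θ • w0‖ ^ 2 + 2 * ⟪Real.cos θ • w0, Real.sin θ • v⟫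
            + ‖Real.sin θ • v‖ ^ 2 := norm_add_sq_real _ _
      have h2 : ⟪Real.cos θ • w0, Real.sin θ • v⟫ = 0 := by
        rw [real_inner_smul_left, real_inner_smul_right, hvw0]
        ring
      have h3 : ‖Real.cos θ • w0‖ ^ 2 = Real.cos θ ^ 2 := by
        rw [norm_smul, hw0, mul_one, Real.norm_eq_abs, sq_abs]
      have h4 : ‖Real.sin θ • v‖ ^ 2 = Real.sin θ ^ 2 := by
        rw [norm_smul, hvn, mul_one, Real.norm_eq_abs, sq_abs]
      rw [hW_def]
      simp only []
      rw [h1, h2, h3, h4]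
      have := Real.sin_sq_add_cos_sq θ
      linarith
    have h5 : (‖W θ‖ - 1) * (‖W θ‖ + 1) = 0 := by nlinarith
    rcases mul_eq_zero.mp h5 with h | h
    · linarith
    · have := norm_nonneg (W θ); linarith
  have hWQ : ∀ θ, ⟪W θ, vQ⟫ = qf θ := by
    intro θ
    rw [hW_def]
    simp only []
    rw [inner_add_left, real_inner_smul_left, real_inner_smul_left, hw0Q, ← hq1_def, hqf_def]
  have hWP : ∀ θ, ⟪W θ, vP⟫ = -(sf θ) := by
    intro θ
    rw [hW_def]
    simp only []
    rw [inner_add_left, real_inner_smul_left, real_inner_smul_left, hw0P, ← hp1_def, hsf_def]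
    ring
  have hqf0 : qf 0 = q0 := by rw [hqf_def]; simp
  have hsf0 : sf 0 = s0 := by rw [hsf_def]; simp
  have hqf_cont : Continuous qf := by
    rw [hqf_def]; exact (Real.continuous_cos.mul continuous_const).add
      (Real.continuous_sin.mul continuous_const)
  have hsf_cont : Continuous sf := by
    rw [hsf_def]; exact (Real.continuous_cos.mul continuous_const).sub
      (Real.continuous_sin.mul continuous_const)
  have hUopen : IsOpen {θ : ℝ | 0 < qf θ ∧ 0 < sf θ} :=
    (isOpen_lt continuous_const hqf_cont).inter (isOpen_lt continuous_const hsf_cont)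
  have hU : {θ : ℝ | 0 < qf θ ∧ 0 < sf θ} ∈ nhds (0 : ℝ) :=
    hUopen.mem_nhds (by rw [Set.mem_setOf_eq, hqf0, hsf0]; exact ⟨hq0, hs0⟩)
  -- derivatives
  have hdq : HasDerivAt qf q1 0 := by
    have h := ((Real.hasDerivAt_cos 0).mul_const q0).add ((Real.hasDerivAt_sin 0).mul_const q1)
    simp only [Real.sin_zero, Real.cos_zero, neg_zero, zero_mul, one_mul, zero_add] at h
    exact h
  have hds : HasDerivAt sf (-p1) 0 := by
    have h := ((Real.hasDerivAt_cos 0).mul_const s0).sub ((Real.hasDerivAt_sin 0).mul_const p1)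
    simp only [Real.sin_zero, Real.cos_zero, neg_zero, zero_mul, one_mul, zero_sub] at h
    exact h
  set F0 : ℝ → ℝ := fun θ => α / qf θ + β / sf θ with hF0_def
  have hqf0ne : qf 0 ≠ 0 := by rw [hqf0]; exact ne_of_gt hq0
  have hsf0ne : sf 0 ≠ 0 := by rw [hsf0]; exact ne_of_gt hs0
  have hdF0 : HasDerivAt F0 ((0 * qf 0 - α * q1) / qf 0 ^ 2 + (0 * sf 0 - β * (-p1)) / sf 0 ^ 2)
      0 := ((hasDerivAt_const (0:ℝ) α).div hdq hqf0ne).add ((hasDerivAt_const (0:ℝ) β).div hds hsf0ne)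
  have hF00 : F0 0 = r := by rw [hF0_def]; simp only []; rw [hqf0, hsf0, hkey]
  have hmin : IsLocalMin F0 0 := by
    have hev : ∀ᶠ θ in nhds (0:ℝ), F0 0 ≤ F0 θ := by
      filter_upwards [hU] with θ hθ
      have h1 : r ≤ segLen D p (W θ) := by
        rw [hr_def]; exact inacc_le_segLen D p (W θ) (hWn θ)
      have h2 := hcb p (W θ) (qf θ) (sf θ) hp hθ.1 hθ.2 (hWQ θ) (hWP θ)
      rw [← hα_def, ← hβ_def] at h2
      rw [hF00, hF0_def]
      exact le_trans h1 h2
    exact hev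
  have hd0 : (0 * qf 0 - α * q1) / qf 0 ^ 2 + (0 * sf 0 - β * (-p1)) / sf 0 ^ 2 = 0 :=
    hmin.hasDerivAt_eq_zero hdF0
  set hfun : ℝ → ℝ := fun θ => s0 / sf θ - q0 / qf θ with hh_def
  have hdh : HasDerivAt hfun ((0 * sf 0 - s0 * (-p1)) / sf 0 ^ 2 - (0 * qf 0 - q0 * q1) / qf 0 ^ 2)
      0 := ((hasDerivAt_const (0:ℝ) s0).div hds hsf0ne).sub ((hasDerivAt_const (0:ℝ) q0).div hdq hqf0ne)
  -- choose epsilon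
  refine ⟨min (μ * r) ((1 - μ) * r), lt_min hμr h1r, ?_⟩
  intro x hx hxp hxd
  obtain ⟨a2, b2, ha2, hb2, hab2, hx_eq⟩ := hx
  set t : ℝ := (b2 - μ) * r with ht_def
  have hsc3 : ((b2 - μ) * r) • w0 = (b2 - μ) • (Q - P) := by
    rw [hw0_def, smul_smul]
    congr 1
    field_simp
  have hx_eq2 : x = p + t • w0 := by
    rw [ht_def, hsc3, hp_eq, ← hx_eq]
    have : a2 = 1 - b2 := by linarith
    rw [this]
    module
  have hdxp : dist x p = |t| := by
    rw [dist_eq_norm, hx_eq2]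
    simp only [add_sub_cancel_left]
    rw [norm_smul, hw0, mul_one, Real.norm_eq_abs]
  have ht0 : t ≠ 0 := by
    intro h
    apply hxp
    rw [hx_eq2, h, zero_smul, add_zero]
  have htlt : |t| < min (μ * r) ((1 - μ) * r) := by rw [← hdxp]; exact hxd
  -- x ∈ D
  have hxD : x ∈ D := by
    rcases lt_or_gt_of_ne ht0 with hneg | hpos
    · -- t < 0 : between P and p
      have hcpos : 0 < -t / (μ * r) := div_pos (by linarith) hμr
      have hclt : -t / (μ * r) < 1 := by
        rw [div_lt_one hμr]
        have := (abs_lt.mp (lt_of_lt_of_le htlt (min_le_left _ _))).1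
        linarith
      have hmem : x ∈ openSegment ℝ p P := by
        refine ⟨1 - (-t / (μ * r)), -t / (μ * r), by linarith, hcpos, by ring, ?_⟩
        rw [hx_eq2, hP_eq]
        have hc : (-t / (μ * r)) * (-(μ * r)) = t := by field_simp
        rw [smul_add, smul_smul, hc]
        module
      have := hConv.openSegment_interior_closure_subset_interior
        (by rw [hOpen.interior_eq]; exact hp) hPcl hmem
      rwa [hOpen.interior_eq] at this
    · -- t > 0 : between p and Q
      have hcpos : 0 < t / ((1 - μ) * r) := div_pos hpos h1r
      have hclt : t / ((1 - μ) * r) < 1 := by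
        rw [div_lt_one h1r]
        have := (abs_lt.mp (lt_of_lt_of_le htlt (min_le_right _ _))).2
        linarith
      have hmem : x ∈ openSegment ℝ p Q := by
        refine ⟨1 - t / ((1 - μ) * r), t / ((1 - μ) * r), by linarith, hcpos, by ring, ?_⟩
        rw [hx_eq2, hQ_eq]
        have hc : (t / ((1 - μ) * r)) * ((1 - μ) * r) = t := by rw [div_mul_cancel₀ t h1r.ne']
        rw [smul_add, smul_smul, hc]
        module
      have := hConv.openSegment_interior_closure_subset_interior
        (by rw [hOpen.interior_eq]; exact hp) hQcl hmem
      rwa [hOpen.interior_eq] at this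
  -- inner products at x
  have hxQ : ⟪x, vQ⟫ = ⟪p, vQ⟫ + t * q0 := by
    rw [hx_eq2, inner_add_left, real_inner_smul_left, hw0Q]
  have hxP : ⟪x, vP⟫ = ⟪p, vP⟫ - t * s0 := by
    rw [hx_eq2, inner_add_left, real_inner_smul_left, hw0P]
    ring
  -- the perturbed function
  set F : ℝ → ℝ := fun θ => (α - t * q0) / qf θ + (β + t * s0) / sf θ with hF_def
  have hFeq : F = fun θ => F0 θ + t * hfun θ := by
    funext θ
    rw [hF_def, hF0_def, hh_def]
    simp only []
    ring
  have hdF : HasDerivAt F (t * ‖u‖) 0 := by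
    rw [hFeq]
    have h := hdF0.add ((hdh.const_mul t))
    have heq : (0 * qf 0 - α * q1) / qf 0 ^ 2 + (0 * sf 0 - β * (-p1)) / sf 0 ^ 2
        + t * ((0 * sf 0 - s0 * (-p1)) / sf 0 ^ 2 - (0 * qf 0 - q0 * q1) / qf 0 ^ 2)
        = t * ‖u‖ := by
      rw [hd0, zero_add, ← hvu]
      congr 1
      rw [hqf0, hsf0]
      field_simp
      ring
    rw [← heq]
    exact h
  have hF0v : F 0 = r := by
    rw [hF_def]
    simp only []
    rw [hqf0, hsf0, ← hkey]
    field_simp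
    ring
  obtain ⟨θ, hθU, hθlt⟩ := exists_lt_of_hasDerivAt_ne hdF (mul_ne_zero ht0 (ne_of_gt hun)) hU
  have h6 : inacc D x ≤ segLen D x (W θ) := inacc_le_segLen D x (W θ) (hWn θ)
  have h7 := hcb x (W θ) (qf θ) (sf θ) hxD hθU.1 hθU.2 (hWQ θ) (hWP θ)
  have h8 : (⟪Q, vQ⟫ - ⟪x, vQ⟫) / qf θ + (⟪P, vP⟫ - ⟪x, vP⟫) / sf θ = F θ := by
    rw [hF_def]
    simp only []
    rw [hxQ, hxP, hα_def, hβ_def]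
    ring_nf
  rw [h8] at h7
  rw [hF0v] at hθlt
  exact lt_of_le_of_lt (le_trans h6 h7) hθlt
end
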